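/- Let p ∈ [2,∞), q = p/(p−1) (so pq = p + q), let c₁, c₂ ∈ ℝ, and define F on the open positive orthant {(x,y,z) ∈ ℝ³ : x,y,z > 0} by F(x,y,z) = −((p+c₁)/p)·log x − ((q+c₁)/q)·log y + (c₁ − 1)·log z + c₂. Then the Hessian F'' is positive definite (at every point, equivalently at one point) if and only if −q < c₁ < 1; and F satisfies det F'' = e^{2F} on the whole orthant if and only if c₁ = 0 and c₂ = 0, in which case F(x,y,z) = −log(xyz). -/

import Mathlib

open Set Real

/-- The Hessian matrix of a function on ℝⁿ. -/
noncomputable def hessian {n : ℕ} (F : (Fin n → ℝ) → ℝ) (x : Fin n → ℝ) :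
    Matrix (Fin n) (Fin n) ℝ :=
  fun i j => fderiv ℝ (fun y => fderiv ℝ F y (Pi.single j 1)) x (Pi.single i 1)

lemma hess_log_ansatz (A B C c₂ : ℝ) (F : (Fin 3 → ℝ) → ℝ)
    (hF : ∀ v : Fin 3 → ℝ,
      F v = A * Real.log (v 0) + B * Real.log (v 1) + C * Real.log (v 2) + c₂)
    (v : Fin 3 → ℝ) (h0 : 0 < v 0) (h1 : 0 < v 1) (h2 : 0 < v 2) :
    hessian F v = Matrix.diagonal (fun i => -(![A, B, C] i) / (v i) ^ 2) := by
  have hFe : F = fun w : Fin 3 → ℝ =>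
      A * Real.log (w 0) + B * Real.log (w 1) + C * Real.log (w 2) + c₂ := funext hF
  set s : Set (Fin 3 → ℝ) := {y | 0 < y 0} ∩ ({y | 0 < y 1} ∩ {y | 0 < y 2}) with hs_def
  have hs : IsOpen s :=
    (isOpen_lt continuous_const (continuous_apply 0)).inter
      ((isOpen_lt continuous_const (continuous_apply 1)).inter
        (isOpen_lt continuous_const (continuous_apply 2)))
  have hvs : v ∈ s := ⟨h0, h1, h2⟩
  have grad : ∀ y ∈ s, ∀ j : Fin 3,
      fderiv ℝ F y (Pi.single j 1) = ![A, B, C] j * (y j)⁻¹ := by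
    rintro y ⟨hy0, hy1, hy2⟩ j
    have hlog : ∀ i : Fin 3, 0 < y i → HasFDerivAt (fun w : Fin 3 → ℝ => Real.log (w i))
        ((y i)⁻¹ • ContinuousLinearMap.proj (R := ℝ) (φ := fun _ : Fin 3 => ℝ) i) y := by
      intro i hi
      exact (Real.hasDerivAt_log hi.ne').comp_hasFDerivAt y
        (ContinuousLinearMap.proj (R := ℝ) (φ := fun _ : Fin 3 => ℝ) i).hasFDerivAt
    have hD : HasFDerivAt F
        (A • ((y 0)⁻¹ • ContinuousLinearMap.proj (R := ℝ) (φ := fun _ : Fin 3 => ℝ) 0)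
          + B • ((y 1)⁻¹ • ContinuousLinearMap.proj (R := ℝ) (φ := fun _ : Fin 3 => ℝ) 1)
          + C • ((y 2)⁻¹ • ContinuousLinearMap.proj (R := ℝ) (φ := fun _ : Fin 3 => ℝ) 2)) y := by
      rw [hFe]
      exact ((((hlog 0 hy0).const_mul A).add ((hlog 1 hy1).const_mul B)).add
        ((hlog 2 hy2).const_mul C)).add_const c₂
    rw [hD.fderiv]
    fin_cases j <;>
      simp [ContinuousLinearMap.proj_apply, Pi.single_apply, Fin.ext_iff]
  have hvj : ∀ j : Fin 3, 0 < v j := by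
    intro j; fin_cases j <;> assumption
  funext i j
  show fderiv ℝ (fun y => fderiv ℝ F y (Pi.single j 1)) v (Pi.single i 1) = _
  have hev : (fun y => fderiv ℝ F y (Pi.single j 1))
      =ᶠ[nhds v] (fun y => ![A, B, C] j * (y j)⁻¹) := by
    filter_upwards [hs.mem_nhds hvs] with y hy using grad y hy j
  rw [hev.fderiv_eq]
  have hD2 : HasFDerivAt (fun y : Fin 3 → ℝ => ![A, B, C] j * (y j)⁻¹)
      (![A, B, C] j • ((-((v j) ^ 2)⁻¹) •
        ContinuousLinearMap.proj (R := ℝ) (φ := fun _ : Fin 3 => ℝ) j)) v := by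
    exact ((hasDerivAt_inv (hvj j).ne').comp_hasFDerivAt v
      (ContinuousLinearMap.proj (R := ℝ) (φ := fun _ : Fin 3 => ℝ) j).hasFDerivAt).const_mul _
  rw [hD2.fderiv]
  simp only [ContinuousLinearMap.smul_apply, ContinuousLinearMap.proj_apply,
    Pi.single_apply, Matrix.diagonal, Matrix.of_apply]
  by_cases h : i = j
  · subst h; simp; ring
  · simp [h, Ne.symm h]

/-- for the logarithmic ansatz
F(x,y,z) = −((p+c₁)/p)·log x − ((q+c₁)/q)·log y + (c₁−1)·log z + c₂ on the open positive
orthant, the Hessian is positive definite iff −q < c₁ < 1, and det F'' = e^{2F} holds on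
the whole orthant iff c₁ = 0 and c₂ = 0, in which case F(x,y,z) = −log(xyz). -/
theorem orthant_solution_characterization (p q : ℝ) (hp : 2 ≤ p) (hq : q = p / (p - 1))
    (c₁ c₂ : ℝ) (F : (Fin 3 → ℝ) → ℝ)
    (hF : ∀ v : Fin 3 → ℝ,
      F v = -((p + c₁)/p) * Real.log (v 0) - ((q + c₁)/q) * Real.log (v 1)
        + (c₁ - 1) * Real.log (v 2) + c₂) :
    ((∀ v : Fin 3 → ℝ, 0 < v 0 → 0 < v 1 → 0 < v 2 → (hessian F v).PosDef) ↔
      (-q < c₁ ∧ c₁ < 1)) ∧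
    ((∀ v : Fin 3 → ℝ, 0 < v 0 → 0 < v 1 → 0 < v 2 →
        (hessian F v).det = Real.exp (2 * F v)) ↔ (c₁ = 0 ∧ c₂ = 0)) ∧
    (c₁ = 0 → c₂ = 0 → ∀ v : Fin 3 → ℝ, 0 < v 0 → 0 < v 1 → 0 < v 2 →
      F v = -Real.log (v 0 * v 1 * v 2)) := by
  have hp0 : (0:ℝ) < p := by linarith
  have hp1 : (0:ℝ) < p - 1 := by linarith
  have hq0 : (0:ℝ) < q := by rw [hq]; positivity
  have hqle : q ≤ p := by rw [hq, div_le_iff₀ hp1]; nlinarith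
  set A : ℝ := -((p + c₁)/p) with hA
  set B : ℝ := -((q + c₁)/q) with hB
  set C : ℝ := c₁ - 1 with hC
  have hF' : ∀ v : Fin 3 → ℝ,
      F v = A * Real.log (v 0) + B * Real.log (v 1) + C * Real.log (v 2) + c₂ := by
    intro v; rw [hF v, hA, hB, hC]; ring
  have hdiag := hess_log_ansatz A B C c₂ F hF'
  refine ⟨⟨?_, ?_⟩, ⟨?_, ?_⟩, ?_⟩
  · intro h
    have h1 := h (fun _ => 1) one_pos one_pos one_pos
    rw [hdiag _ one_pos one_pos one_pos, Matrix.posDef_diagonal_iff] at h1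
    have e1 := h1 1
    have e2 := h1 2
    simp only [Matrix.cons_val_one, Matrix.head_cons, Matrix.cons_val_two, Matrix.tail_cons,
      Matrix.cons_val_zero, hB, hC, neg_neg, one_pow, div_one] at e1 e2
    constructor
    · have := mul_pos e1 hq0
      rw [div_mul_cancel₀ _ hq0.ne'] at this
      linarith
    · linarith
  · rintro ⟨hc1, hc2⟩ v h0 h1 h2
    rw [hdiag v h0 h1 h2, Matrix.posDef_diagonal_iff]
    have hA' : 0 < -A := by rw [hA, neg_neg]; exact div_pos (by linarith) hp0
    have hB' : 0 < -B := by rw [hB, neg_neg]; exact div_pos (by linarith) hq0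
    have hC' : 0 < -C := by rw [hC]; linarith
    intro i
    fin_cases i
    · show 0 < -(![A, B, C] 0) / v 0 ^ 2
      rw [Matrix.cons_val_zero]
      exact div_pos hA' (pow_pos h0 2)
    · show 0 < -(![A, B, C] 1) / v 1 ^ 2
      rw [Matrix.cons_val_one, Matrix.cons_val_zero]
      exact div_pos hB' (pow_pos h1 2)
    · show 0 < -(![A, B, C] 2) / v 2 ^ 2
      rw [Matrix.cons_val_two, Matrix.tail_cons, Matrix.head_cons]
      exact div_pos hC' (pow_pos h2 2)
  · intro h
    have hone := h (fun _ => 1) one_pos one_pos one_pos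
    rw [hdiag _ one_pos one_pos one_pos, Matrix.det_diagonal, Fin.prod_univ_three,
      hF' (fun _ => 1)] at hone
    simp only [Matrix.cons_val_zero, Matrix.cons_val_one, Matrix.head_cons,
      Matrix.cons_val_two, Matrix.tail_cons, Real.log_one, mul_zero, zero_add, add_zero,
      one_pow, div_one] at hone
    -- hone : -A * -B * -C = exp (2 * c₂)
    set w : Fin 3 → ℝ := ![Real.exp 1, 1, 1] with hw
    have hw0 : 0 < w 0 := by simp only [hw, Matrix.cons_val_zero]; exact Real.exp_pos 1
    have hw1 : 0 < w 1 := by norm_num [hw]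
    have hw2 : 0 < w 2 := by simp only [hw, Matrix.cons_val_two, Matrix.tail_cons, Matrix.head_cons]; norm_num
    have hwe := h w hw0 hw1 hw2
    rw [hdiag _ hw0 hw1 hw2, Matrix.det_diagonal, Fin.prod_univ_three, hF' w] at hwe
    have hwv0 : w 0 = Real.exp 1 := by simp [hw]
    have hwv1 : w 1 = 1 := by simp [hw]
    have hwv2 : w 2 = 1 := by simp [hw]
    rw [hwv0, hwv1, hwv2] at hwe
    simp only [Matrix.cons_val_zero, Matrix.cons_val_one, Matrix.head_cons,
      Matrix.cons_val_two, Matrix.tail_cons, Real.log_exp, Real.log_one, mul_zero,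
      add_zero, mul_one, one_pow, div_one] at hwe
    -- hwe : -A/(exp 1)^2 * -B * -C = exp (2 * (A + c₂))
    have he2 : (Real.exp 1) ^ 2 = Real.exp 2 := by
      rw [show (2:ℝ) = 1 + 1 by norm_num, Real.exp_add, sq]
    have step : Real.exp (2 * c₂) / Real.exp 2 = Real.exp (2 * (A + c₂)) := by
      rw [← hone, ← hwe, ← he2]; ring
    rw [div_eq_iff (Real.exp_pos 2).ne', ← Real.exp_add, Real.exp_eq_exp] at step
    have hA1 : A = -1 := by linarith
    have hc1 : c₁ = 0 := by
      have h1 : (p + c₁)/p = 1 := by rw [hA] at hA1; linarith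
      field_simp at h1; linarith
    refine ⟨hc1, ?_⟩
    have hAone : -A = 1 := by rw [hA1]; norm_num
    have hBone : -B = 1 := by
      rw [hB, hc1, neg_neg, add_zero, div_self hq0.ne']
    have hCone : -C = 1 := by rw [hC, hc1]; norm_num
    rw [hAone, hBone, hCone] at hone
    norm_num at hone
    rw [eq_comm, Real.exp_eq_one_iff] at hone
    linarith
  · rintro ⟨hc1, hc2⟩ v h0 h1 h2
    have hA1 : A = -1 := by rw [hA, hc1, add_zero, div_self hp0.ne']
    have hB1 : B = -1 := by rw [hB, hc1, add_zero, div_self hq0.ne']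
    have hC1 : C = -1 := by rw [hC, hc1]; norm_num
    rw [hdiag v h0 h1 h2, Matrix.det_diagonal, Fin.prod_univ_three, hF' v,
      hA1, hB1, hC1, hc2]
    simp only [Matrix.cons_val_zero, Matrix.cons_val_one, Matrix.head_cons,
      Matrix.cons_val_two, Matrix.tail_cons, neg_neg]
    have et : ∀ t : ℝ, 0 < t → Real.exp (-2 * Real.log t) = (t ^ 2)⁻¹ := by
      intro t ht
      rw [show (-2:ℝ) * Real.log t = -Real.log t + -Real.log t by ring, Real.exp_add,
        Real.exp_neg, Real.exp_log ht, sq, mul_inv]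
    rw [show 2 * (-1 * Real.log (v 0) + -1 * Real.log (v 1) + -1 * Real.log (v 2) + 0)
        = -2 * Real.log (v 0) + (-2 * Real.log (v 1) + -2 * Real.log (v 2)) by ring,
      Real.exp_add, Real.exp_add, et _ h0, et _ h1, et _ h2]
    ring
  · intro hc1 hc2 v h0 h1 h2
    rw [hF' v, hA, hB, hC, hc1, hc2]
    rw [Real.log_mul (by positivity) h2.ne', Real.log_mul h0.ne' h1.ne']
    field_simp
    ring
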